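/- Let A and S be rings, let d_A ∈ A act locally ad-nilpotently on A, and let d_S ∈ S act locally ad-nilpotently on S. Let B be an (A,S)-bimodule that is finitely generated as a right S-module and on which d acts locally ad-nilpotently, i.e., every b ∈ B is annihilated by some power of the additive map ad d : b ↦ d_A·b − b·d_S. Let L be a right S-module in which every element is annihilated by some power of d_S. Then for every homomorphism of right S-modules θ : B → L there exists j ≥ 0 such that θ(d_A^j · b) = 0 for all b ∈ B; equivalently, the right action of d on Hom_S(B,L) given by (θ·d)(b) = θ(d_A·b) is locally nilpotent. -/

import Mathlib

/-!
STATEMENT 7: let `A`, `S` be rings with `d_A ∈ A`, `d_S ∈ S` acting locally ad-nilpotently,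
`B` an `(A,S)`-bimodule, finitely generated as a right `S`-module, on which `d` acts locally
ad-nilpotently, and `L` a right `S`-module in which every element is killed by a power of
`d_S`.  Then for every right `S`-module map `θ : B → L` there is `j` with `θ(d_A^j · B) = 0`.
-/

open MulOpposite

theorem stmt_7 {A S : Type*} [Ring A] [Ring S] (dA : A) (dS : S)
    -- `d_A` acts locally ad-nilpotently on `A`, and `d_S` on `S`
    (hA : ∀ a : A, ∃ n : ℕ, (fun a => dA * a - a * dA)^[n] a = 0)
    (hS : ∀ s : S, ∃ n : ℕ, (fun s => dS * s - s * dS)^[n] s = 0)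
    -- `B` is an `(A,S)`-bimodule (left `A`-module, right `S`-module, commuting actions),
    -- finitely generated as a right `S`-module
    (B : Type*) [AddCommGroup B] [Module A B] [Module Sᵐᵒᵖ B] [SMulCommClass A Sᵐᵒᵖ B]
    [Module.Finite Sᵐᵒᵖ B]
    -- on which `d` acts locally ad-nilpotently: `(ad d)(b) = d_A·b - b·d_S`
    (hB : ∀ b : B, ∃ n : ℕ, (fun b => dA • b - op dS • b)^[n] b = 0)
    -- `L` is a right `S`-module, every element annihilated by some power of `d_S`
    (L : Type*) [AddCommGroup L] [Module Sᵐᵒᵖ L]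
    (hL : ∀ x : L, ∃ n : ℕ, (op dS ^ n) • x = 0)
    -- `θ : B → L` is a homomorphism of right `S`-modules
    (θ : B →ₗ[Sᵐᵒᵖ] L) :
    ∃ j : ℕ, ∀ b : B, θ (dA ^ j • b) = 0 := by
  classical
  set lA : AddMonoid.End B := DistribMulAction.toAddMonoidEnd A B dA with hlAdef
  set rS : AddMonoid.End B := DistribMulAction.toAddMonoidEnd Sᵐᵒᵖ B (op dS) with hrSdef
  set D : AddMonoid.End B := lA - rS with hDdef
  have hlA_pow : ∀ (m : ℕ) (b : B), (lA ^ m) b = dA ^ m • b := by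
    intro m b
    rw [hlAdef, ← map_pow]
    rfl
  have hrS_pow : ∀ (m : ℕ) (b : B), (rS ^ m) b = (op dS ^ m) • b := by
    intro m b
    rw [hrSdef, ← map_pow]
    rfl
  have hcomm : Commute D rS := by
    have h : Commute lA rS := AddMonoidHom.ext fun b => smul_comm dA (op dS) b
    exact h.sub_left (Commute.refl rS)
  have hmul : ∀ (f g : AddMonoid.End B) (b : B), (f * g) b = f (g b) := fun _ _ _ => rfl
  have hsum_apply : ∀ (t : Finset ℕ) (f : ℕ → AddMonoid.End B) (b : B),
      (∑ i ∈ t, f i) b = ∑ i ∈ t, f i b := by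
    intro t f b
    induction t using Finset.induction with
    | empty => rfl
    | insert _ _ h ih => rw [Finset.sum_insert h, Finset.sum_insert h, ← ih]; rfl
  have hD_iter : ∀ (i : ℕ) (b : B), (D ^ i) b = (fun b => dA • b - op dS • b)^[i] b :=
    fun i b => rfl
  have hDzero : ∀ (b : B) (n : ℕ), (D ^ n) b = 0 → ∀ i, n ≤ i → (D ^ i) b = 0 := by
    intro b n hn i hi
    have : D ^ i = D ^ (i - n) * D ^ n := by
      rw [← pow_add, Nat.sub_add_cancel hi]
    rw [this, hmul, hn, map_zero]
  have key : ∀ b : B, ∃ N : ℕ, ∀ m, N ≤ m → θ (dA ^ m • b) = 0 := by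
    intro b
    obtain ⟨n, hn⟩ := hB b
    have hn' : (D ^ n) b = 0 := by rw [hD_iter]; exact hn
    choose g hg using fun i : ℕ => hL (θ ((D ^ i) b))
    refine ⟨n + (Finset.range n).sup g, fun m hm => ?_⟩
    rw [← hlA_pow]
    have hlA_eq : lA = D + rS := by rw [hDdef, sub_add_cancel]
    rw [hlA_eq, hcomm.add_pow]
    rw [hsum_apply, map_sum]
    refine Finset.sum_eq_zero fun i hi => ?_
    have hterm : (D ^ i * rS ^ (m - i) * (m.choose i : AddMonoid.End B)) b
        = (m.choose i) • ((rS ^ (m - i)) ((D ^ i) b)) := by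
      rw [(hcomm.pow_pow i (m - i)).eq]
      have : rS ^ (m - i) * D ^ i * (m.choose i : AddMonoid.End B)
          = (m.choose i : AddMonoid.End B) * (rS ^ (m - i) * D ^ i) := by
        rw [(Nat.commute_cast (rS ^ (m - i) * D ^ i) (m.choose i)).eq]
      rw [this, ← nsmul_eq_mul]
      rfl
    rw [hterm]
    by_cases hin : n ≤ i
    · rw [hDzero b n hn' i hin]
      simp
    · push_neg at hin
      rw [hrS_pow, map_nsmul, map_smul]
      have hgi : g i ≤ m - i := by
        have h1 : g i ≤ (Finset.range n).sup g := Finset.le_sup (Finset.mem_range.mpr hin)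
        omega
      have : (op dS : Sᵐᵒᵖ) ^ (m - i) = op dS ^ (m - i - g i) * op dS ^ (g i) := by
        rw [← pow_add, Nat.sub_add_cancel hgi]
      rw [this, mul_smul, hg i]
      simp
  choose N hN using key
  obtain ⟨s, hs⟩ := Module.Finite.fg_top (R := Sᵐᵒᵖ) (M := B)
  refine ⟨s.sup N, fun b => ?_⟩
  have hb : b ∈ Submodule.span Sᵐᵒᵖ (s : Set B) := hs ▸ Submodule.mem_top
  induction hb using Submodule.span_induction with
  | mem x hx => exact hN x _ (Finset.le_sup hx)
  | zero => simp
  | add x y _ _ hx hy => rw [smul_add, map_add, hx, hy, add_zero]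
  | smul c x _ hx => rw [smul_comm, map_smul, hx, smul_zero]
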